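/- Fix η > 0. Let σ₀ ∈ (0,∞)^k and suppose E attains its infimum over M_{σ₀}^r at a point (u₀,ω₀) with Λ(u₀,ω₀) < √(2α) + η. Then there exists δ > 0 such that for every σ ∈ (0,∞)^k with |σ − σ₀| < δ, one has inf_{M_σ^r} E < (√(2α) + η)·∑_{j=1}^k σ_j; indeed, setting ω_σ^j := ω₀^j σ_j/σ₀^j, the pair (u₀, ω_σ) belongs to M_σ^r and Λ(u₀,ω_σ) < √(2α) + η. -/

import Mathlib

open MeasureTheory Filter Topology RealInnerProductSpace

noncomputable section

/-- The Euclidean norm of a vector in `ℝ^k`. -/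
def vnorm {k : ℕ} (z : Fin k → ℝ) : ℝ := Real.sqrt (∑ j, (z j) ^ 2)

/-- The `j`-th partial derivative of `G`. -/
def pd {k : ℕ} (G : (Fin k → ℝ) → ℝ) (j : Fin k) (z : Fin k → ℝ) : ℝ :=
  fderiv ℝ G z (Pi.single j 1)

/-- `F(z) = G(z) + ½ ∑_j m_j² z_j²`. -/
def Ffun {k : ℕ} (m : Fin k → ℝ) (G : (Fin k → ℝ) → ℝ) (z : Fin k → ℝ) : ℝ :=
  G z + (1 / 2) * ∑ j, (m j) ^ 2 * (z j) ^ 2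

/-- `α = inf { F(z)/|z|² : z ∈ [0,∞)^k \ {0} }`. -/
def alphaInf {k : ℕ} (m : Fin k → ℝ) (G : (Fin k → ℝ) → ℝ) : ℝ :=
  sInf {r | ∃ z : Fin k → ℝ, (∀ j, 0 ≤ z j) ∧ z ≠ 0 ∧ r = Ffun m G z / ∑ j, (z j) ^ 2}

/-- `α_j = inf { F(z)/∑_{h≠j} z_h² : z ∈ [0,∞)^k, ∑_{h≠j} z_h² ≠ 0 }`. -/
def alphaJ {k : ℕ} (m : Fin k → ℝ) (G : (Fin k → ℝ) → ℝ) (j : Fin k) : ℝ :=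
  sInf {r | ∃ z : Fin k → ℝ, (∀ h, 0 ≤ z h) ∧
    (∑ h ∈ Finset.univ.erase j, (z h) ^ 2) ≠ 0 ∧
    r = Ffun m G z / ∑ h ∈ Finset.univ.erase j, (z h) ^ 2}

/-- Membership in `H¹(ℝⁿ, ℝ)`: the function and its gradient are in `L²`. -/
def MemH1 {n : ℕ} (f : EuclideanSpace ℝ (Fin n) → ℝ) : Prop :=
  MemLp f 2 (volume : Measure (EuclideanSpace ℝ (Fin n))) ∧
  MemLp (fun x => gradient f x) 2 (volume : Measure (EuclideanSpace ℝ (Fin n)))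

/-- Membership in `H = H¹(ℝⁿ, ℝ^k)`, componentwise. -/
def MemH1k {n k : ℕ} (u : EuclideanSpace ℝ (Fin n) → Fin k → ℝ) : Prop :=
  ∀ j, MemH1 (fun x => u x j)

/-- Radially symmetric (vector-valued) functions. -/
def Radial {n k : ℕ} (u : EuclideanSpace ℝ (Fin n) → Fin k → ℝ) : Prop :=
  ∀ x y : EuclideanSpace ℝ (Fin n), ‖x‖ = ‖y‖ → u x = u y

/-- The squared `H¹` norm of a scalar function. -/
def H1normSq {n : ℕ} (f : EuclideanSpace ℝ (Fin n) → ℝ) : ℝ :=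
  (∫ x, (f x) ^ 2) + ∫ x, ‖gradient f x‖ ^ 2

/-- The squared `H` norm, `‖u‖_H² = ∑_j ‖u_j‖_{H¹}²`. -/
def HnormSq {n k : ℕ} (u : EuclideanSpace ℝ (Fin n) → Fin k → ℝ) : ℝ :=
  ∑ j, H1normSq (fun x => u x j)

/-- The energy functional `E`. -/
def En {n k : ℕ} (m : Fin k → ℝ) (G : (Fin k → ℝ) → ℝ)
    (u : EuclideanSpace ℝ (Fin n) → Fin k → ℝ) (ω : Fin k → ℝ) : ℝ :=
  (1 / 2) * ∑ j, ((∫ x, ‖gradient (fun y => u y j) x‖ ^ 2) +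
      ((m j) ^ 2 + (ω j) ^ 2) * ∫ x, (u x j) ^ 2) +
  ∫ x, G (u x)

/-- The charges `C_j(u, ω) = ω_j ∫ u_j²`. -/
def Ch {n k : ℕ} (u : EuclideanSpace ℝ (Fin n) → Fin k → ℝ) (ω : Fin k → ℝ) (j : Fin k) : ℝ :=
  ω j * ∫ x, (u x j) ^ 2

/-- The constraint set `M_σ`. -/
def InM {n k : ℕ} (σ : Fin k → ℝ) (u : EuclideanSpace ℝ (Fin n) → Fin k → ℝ)
    (ω : Fin k → ℝ) : Prop :=
  MemH1k u ∧ (∀ j, 0 ≤ ω j) ∧ ∀ j, Ch u ω j = σ j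

/-- The radial constraint set `M_σ^r`. -/
def InMr {n k : ℕ} (σ : Fin k → ℝ) (u : EuclideanSpace ℝ (Fin n) → Fin k → ℝ)
    (ω : Fin k → ℝ) : Prop :=
  InM σ u ω ∧ Radial u

/-- The energy/charge ratio `Λ`. -/
def Lam {n k : ℕ} (m : Fin k → ℝ) (G : (Fin k → ℝ) → ℝ)
    (u : EuclideanSpace ℝ (Fin n) → Fin k → ℝ) (ω : Fin k → ℝ) : ℝ :=
  En m G u ω / ∑ j, Ch u ω j

/-- The energy is nonnegative on `H`. -/
lemma en_nonneg {n k : ℕ} (m : Fin k → ℝ) (G : (Fin k → ℝ) → ℝ)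
    (hA1 : ∀ z : Fin k → ℝ, 0 ≤ Ffun m G z)
    (v : EuclideanSpace ℝ (Fin n) → Fin k → ℝ) (τ : Fin k → ℝ)
    (hv : MemH1k v) : 0 ≤ En m G v τ := by
  have hI : ∀ j : Fin k, Integrable (fun x => (v x j) ^ 2) volume := fun j =>
    (hv j).1.integrable_sq
  have hI0 : ∀ j : Fin k, 0 ≤ ∫ x, (v x j) ^ 2 := fun j =>
    integral_nonneg fun x => sq_nonneg _
  have hD0 : ∀ j : Fin k, 0 ≤ ∫ x, ‖gradient (fun y => v y j) x‖ ^ 2 := fun j =>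
    integral_nonneg fun x => sq_nonneg _
  have hs0 : 0 ≤ ∑ j, (m j) ^ 2 * ∫ x, (v x j) ^ 2 :=
    Finset.sum_nonneg fun j _ => mul_nonneg (sq_nonneg _) (hI0 j)
  have key : -((1 / 2) * ∑ j, (m j) ^ 2 * ∫ x, (v x j) ^ 2) ≤ ∫ x, G (v x) := by
    by_cases hg : Integrable (fun x => G (v x)) volume
    · have hsum : Integrable (fun x => ∑ j, (m j) ^ 2 * (v x j) ^ 2) volume :=
        integrable_finset_sum _ fun j _ => (hI j).const_mul _
      have hf : Integrable (fun x => -((1 / 2) * ∑ j, (m j) ^ 2 * (v x j) ^ 2)) volume :=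
        (hsum.const_mul _).neg
      have hle := integral_mono hf hg (fun x => by
        have h := hA1 (v x)
        simp only [Ffun] at h
        linarith)
      calc -((1 / 2) * ∑ j, (m j) ^ 2 * ∫ x, (v x j) ^ 2)
          = ∫ x, -((1 / 2) * ∑ j, (m j) ^ 2 * (v x j) ^ 2) := by
            rw [integral_neg, integral_const_mul,
              integral_finset_sum _ (fun j _ => (hI j).const_mul _)]
            simp only [integral_const_mul]
        _ ≤ ∫ x, G (v x) := hle
    · rw [integral_undef hg]
      linarith
  have h2 : ∑ j, (m j) ^ 2 * ∫ x, (v x j) ^ 2 ≤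
      ∑ j, ((∫ x, ‖gradient (fun y => v y j) x‖ ^ 2) +
        ((m j) ^ 2 + (τ j) ^ 2) * ∫ x, (v x j) ^ 2) :=
    Finset.sum_le_sum fun j _ => by nlinarith [hD0 j, hI0 j, sq_nonneg (τ j)]
  simp only [En]
  linarith

/-- If `E` attains its infimum over `M_{σ₀}^r` at `(u₀, ω₀)` with
`Λ(u₀,ω₀) < √(2α) + η`, then for all `σ` close enough to `σ₀` the rescaled pair
`(u₀, ω_σ)`, `ω_σ^j = ω₀^j σ_j/σ₀^j`, lies in `M_σ^r`, satisfies
`Λ(u₀, ω_σ) < √(2α) + η`, and `inf_{M_σ^r} E < (√(2α) + η)·∑_j σ_j`. -/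
theorem statement17
    (n k : ℕ) (hn : 3 ≤ n) (hk : 1 ≤ k)
    (m : Fin k → ℝ) (hm : ∀ j, 0 < m j) (hmono : Monotone m)
    (G : (Fin k → ℝ) → ℝ) (hG : ContDiff ℝ 1 G)
    (hA1 : (∀ z : Fin k → ℝ, 0 ≤ Ffun m G z) ∧ G 0 = 0)
    (hA2 : ∃ c > (0 : ℝ), ∃ p q : ℝ, 2 < p ∧ p ≤ q ∧ q < 2 * n / ((n : ℝ) - 2) ∧
      ∀ z : Fin k → ℝ, vnorm (fun j => pd G j z) ≤ c * (vnorm z ^ (p - 1) + vnorm z ^ (q - 1)))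
    (η : ℝ) (hη : 0 < η)
    (σ₀ : Fin k → ℝ) (hσ₀ : ∀ j, 0 < σ₀ j)
    (u₀ : EuclideanSpace ℝ (Fin n) → Fin k → ℝ) (ω₀ : Fin k → ℝ)
    (h₀ : InMr σ₀ u₀ ω₀)
    (hmin : ∀ v τ, InMr (n := n) σ₀ v τ → En m G u₀ ω₀ ≤ En m G v τ)
    (hΛ : Lam m G u₀ ω₀ < Real.sqrt (2 * alphaInf m G) + η) :
    ∃ δ > (0 : ℝ), ∀ σ : Fin k → ℝ, (∀ j, 0 < σ j) →
      vnorm (fun j => σ j - σ₀ j) < δ →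
      InMr σ u₀ (fun j => ω₀ j * σ j / σ₀ j) ∧
      Lam m G u₀ (fun j => ω₀ j * σ j / σ₀ j) < Real.sqrt (2 * alphaInf m G) + η ∧
      sInf {r | ∃ v τ, InMr (n := n) σ v τ ∧ r = En m G v τ}
        < (Real.sqrt (2 * alphaInf m G) + η) * ∑ j, σ j := by
  obtain ⟨⟨hH1, hω₀, hCh⟩, hrad⟩ := h₀
  have hne : ∀ j, σ₀ j ≠ 0 := fun j => (hσ₀ j).ne'
  set L := Real.sqrt (2 * alphaInf m G) + η with hLdef
  have hsumpos : 0 < ∑ j, σ₀ j :=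
    Finset.sum_pos (fun j _ => hσ₀ j) ⟨⟨0, hk⟩, Finset.mem_univ _⟩
  -- the function σ ↦ Λ(u₀, ω_σ)
  have hcont : ContinuousAt
      (fun σ : Fin k → ℝ => En m G u₀ (fun j => ω₀ j * σ j / σ₀ j) / ∑ j, σ j) σ₀ := by
    apply ContinuousAt.div
    · apply Continuous.continuousAt
      simp only [En]
      refine Continuous.add (Continuous.mul continuous_const
        (continuous_finset_sum _ fun j _ => Continuous.add continuous_const
          (Continuous.mul (Continuous.add continuous_const
            (by fun_prop))
            continuous_const))) continuous_const
    · exact (continuous_finset_sum _ fun j _ => continuous_apply j).continuousAt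
    · exact hsumpos.ne'
  have hval : (fun σ : Fin k → ℝ => En m G u₀ (fun j => ω₀ j * σ j / σ₀ j) / ∑ j, σ j) σ₀
      < L := by
    have hω : (fun j => ω₀ j * σ₀ j / σ₀ j) = ω₀ := funext fun j => by
      rw [mul_div_assoc, div_self (hne j), mul_one]
    simp only [hω]
    have hLam : Lam m G u₀ ω₀ = En m G u₀ ω₀ / ∑ j, σ₀ j := by
      rw [Lam]
      congr 1
      exact Finset.sum_congr rfl fun j _ => hCh j
    rw [← hLam]
    exact hΛ
  have hev := hcont.tendsto.eventually_lt_const hval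
  rw [Metric.eventually_nhds_iff] at hev
  obtain ⟨δ, hδ, hδP⟩ := hev
  refine ⟨δ, hδ, fun σ hσ hdist => ?_⟩
  have hdlt : dist σ σ₀ < δ := by
    rw [dist_pi_lt_iff hδ]
    intro j
    rw [Real.dist_eq]
    calc |σ j - σ₀ j| = Real.sqrt ((σ j - σ₀ j) ^ 2) := (Real.sqrt_sq_eq_abs _).symm
      _ ≤ vnorm (fun j => σ j - σ₀ j) :=
          Real.sqrt_le_sqrt (Finset.single_le_sum (f := fun i => (σ i - σ₀ i) ^ 2)
            (fun i _ => sq_nonneg _) (Finset.mem_univ j))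
      _ < δ := hdist
  have hflt : En m G u₀ (fun j => ω₀ j * σ j / σ₀ j) / ∑ j, σ j < L := hδP hdlt
  have hChσ : ∀ j, Ch u₀ (fun j => ω₀ j * σ j / σ₀ j) j = σ j := by
    intro j
    have h := hCh j
    simp only [Ch] at h ⊢
    calc ω₀ j * σ j / σ₀ j * ∫ x, (u₀ x j) ^ 2
        = (ω₀ j * ∫ x, (u₀ x j) ^ 2) * σ j / σ₀ j := by ring
      _ = σ₀ j * σ j / σ₀ j := by rw [h]
      _ = σ j := by rw [mul_comm, mul_div_assoc, div_self (hne j), mul_one]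
  have hsumσ : ∑ j, Ch u₀ (fun j => ω₀ j * σ j / σ₀ j) j = ∑ j, σ j :=
    Finset.sum_congr rfl fun j _ => hChσ j
  have hInMr : InMr σ u₀ (fun j => ω₀ j * σ j / σ₀ j) :=
    ⟨⟨hH1, fun j => div_nonneg (mul_nonneg (hω₀ j) (hσ j).le) (hσ₀ j).le, hChσ⟩, hrad⟩
  have hLamσ : Lam m G u₀ (fun j => ω₀ j * σ j / σ₀ j) < L := by
    rw [Lam, hsumσ]
    exact hflt
  refine ⟨hInMr, hLamσ, ?_⟩
  have hsumσpos : 0 < ∑ j, σ j :=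
    Finset.sum_pos (fun j _ => hσ j) ⟨⟨0, hk⟩, Finset.mem_univ _⟩
  have hEnlt : En m G u₀ (fun j => ω₀ j * σ j / σ₀ j) < L * ∑ j, σ j := by
    rw [div_lt_iff₀ hsumσpos] at hflt
    exact hflt
  have hmem : En m G u₀ (fun j => ω₀ j * σ j / σ₀ j) ∈
      {r | ∃ v τ, InMr (n := n) σ v τ ∧ r = En m G v τ} := ⟨u₀, _, hInMr, rfl⟩
  have hbdd : BddBelow {r | ∃ v τ, InMr (n := n) σ v τ ∧ r = En m G v τ} := by
    refine ⟨0, fun r hr => ?_⟩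
    obtain ⟨v, τ, hvt, rfl⟩ := hr
    exact en_nonneg m G hA1.1 v τ hvt.1.1
  exact lt_of_le_of_lt (csInf_le hbdd hmem) hEnlt
end
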